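/- Water-filling is budget-optimal against a decreasing density: let f_c be a strictly decreasing positive density on (0,∞) with CDF F_c, and let scores r₁ ≤ … ≤ r_n with budget n·p. Among all reinforcements R_i ≥ r_i with ∑(R_i − r_i) ≤ n·p, the sum ∑_i F_c(R_i) is maximized by choosing m and level h with R_i = max(r_i, h) where ∑_{r_i < h}(h − r_i) = n·p (raising the lowest scores to a common level h). -/

import Mathlib

open MeasureTheory

/-- Water-filling is budget-optimal against a strictly decreasing density:
raising the lowest scores to the common level `h` that exhausts the budget
maximizes `∑ F_c(R_i)` over all feasible reinforcements. -/
theorem water_filling_optimal (f F : ℝ → ℝ)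
    (hanti : StrictAntiOn f (Set.Ioi 0)) (hpos : ∀ x > (0:ℝ), 0 < f x)
    (hint : IntegrableOn f (Set.Ioi 0))
    (hF : ∀ x, F x = ∫ t in Set.Ioc (0:ℝ) x, f t)
    (n : ℕ) (r : Fin n → ℝ) (hr : ∀ i, 0 < r i)
    (p h : ℝ) (hp : 0 < p)
    (hh : ∑ i, max (h - r i) 0 = n * p)
    (R : Fin n → ℝ) (hRfeas : ∀ i, r i ≤ R i) (hbud : ∑ i, (R i - r i) ≤ n * p) :
    ∑ i, F (R i) ≤ ∑ i, F (max (r i) h) := by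
  rcases Nat.eq_zero_or_pos n with hn | hn
  · subst hn; simp
  have hnp : (0:ℝ) < n * p := mul_pos (by exact_mod_cast hn) hp
  have hhpos : 0 < h := by
    by_contra hcon
    push_neg at hcon
    have hz : ∑ i, max (h - r i) 0 = 0 := by
      apply Finset.sum_eq_zero
      intro i _
      have : h - r i ≤ 0 := by linarith [hr i]
      simp [max_eq_right this]
    rw [hz] at hh
    linarith
  have hFdiff : ∀ a b : ℝ, 0 < a → a ≤ b → F b - F a = ∫ t in Set.Ioc a b, f t := by
    intro a b ha hab
    have hsub1 : Set.Ioc (0:ℝ) a ⊆ Set.Ioi 0 := Set.Ioc_subset_Ioi_self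
    have hsub2 : Set.Ioc a b ⊆ Set.Ioi 0 := fun x hx => lt_trans ha hx.1
    rw [hF, hF, ← Set.Ioc_union_Ioc_eq_Ioc ha.le hab,
      setIntegral_union (Set.Ioc_disjoint_Ioc_of_le le_rfl) measurableSet_Ioc
        (hint.mono_set hsub1) (hint.mono_set hsub2)]
    ring
  have key : ∀ i : Fin n, F (R i) - F (max (r i) h) ≤ f h * (R i - max (r i) h) := by
    intro i
    set W := max (r i) h with hWdef
    have hWpos : 0 < W := lt_of_lt_of_le hhpos (le_max_right _ _)
    have hRpos : 0 < R i := lt_of_lt_of_le (hr i) (hRfeas i)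
    rcases le_total W (R i) with hcase | hcase
    · rw [hFdiff W (R i) hWpos hcase]
      have hsub : Set.Ioc W (R i) ⊆ Set.Ioi 0 := fun x hx => lt_trans hWpos hx.1
      have hb : ∀ t ∈ Set.Ioc W (R i), f t ≤ f h := fun t ht =>
        hanti.antitoneOn (Set.mem_Ioi.2 hhpos) (hsub ht)
          (le_trans (le_max_right _ _) ht.1.le)
      calc ∫ t in Set.Ioc W (R i), f t
          ≤ ∫ _ in Set.Ioc W (R i), f h :=
            setIntegral_mono_on (hint.mono_set hsub)
              (integrableOn_const measure_Ioc_lt_top.ne) measurableSet_Ioc hb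
        _ = f h * (R i - W) := by
            rw [setIntegral_const, measureReal_def, Real.volume_Ioc,
              ENNReal.toReal_ofReal (by linarith), smul_eq_mul]
            ring
    · rcases le_total h (r i) with hc | hc
      · have hRW : R i = W := le_antisymm hcase (max_le (hRfeas i) (hc.trans (hRfeas i)))
        rw [hRW]
        simp
      · have hW : W = h := max_eq_right hc
        have hRh : R i ≤ h := hW ▸ hcase
        have hdiff := hFdiff (R i) h hRpos hRh
        have hsub : Set.Ioc (R i) h ⊆ Set.Ioi 0 := fun x hx => lt_trans hRpos hx.1
        have hb : ∀ t ∈ Set.Ioc (R i) h, f h ≤ f t := fun t ht =>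
          hanti.antitoneOn (hsub ht) (Set.mem_Ioi.2 hhpos) ht.2
        have hineq : ∫ _ in Set.Ioc (R i) h, f h ≤ ∫ t in Set.Ioc (R i) h, f t :=
          setIntegral_mono_on (integrableOn_const measure_Ioc_lt_top.ne)
            (hint.mono_set hsub) measurableSet_Ioc hb
        have hconst : ∫ _ in Set.Ioc (R i) h, f h = f h * (h - R i) := by
          rw [setIntegral_const, measureReal_def, Real.volume_Ioc,
            ENNReal.toReal_ofReal (by linarith), smul_eq_mul]
          ring
        rw [hW]
        rw [hconst] at hineq
        linarith
  have hmax : ∀ i : Fin n, max (r i) h - r i = max (h - r i) 0 := by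
    intro i
    rcases le_total h (r i) with hc | hc
    · rw [max_eq_left hc, max_eq_right (by linarith : h - r i ≤ 0)]
      ring
    · rw [max_eq_right hc, max_eq_left (by linarith : (0:ℝ) ≤ h - r i)]
  have hsumW : ∑ i, (max (r i) h - r i) = n * p := by
    rw [← hh]
    exact Finset.sum_congr rfl fun i _ => hmax i
  have h1 : ∑ i, F (R i) - ∑ i, F (max (r i) h) ≤ f h * ∑ i, (R i - max (r i) h) := by
    rw [← Finset.sum_sub_distrib, Finset.mul_sum]
    exact Finset.sum_le_sum fun i _ => key i
  have h2 : ∑ i, (R i - max (r i) h) ≤ 0 := by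
    have hsplit : ∑ i, (R i - max (r i) h)
        = ∑ i, (R i - r i) - ∑ i, (max (r i) h - r i) := by
      rw [← Finset.sum_sub_distrib]
      exact Finset.sum_congr rfl fun i _ => by ring
    rw [hsplit, hsumW]
    linarith
  have h3 : f h * ∑ i, (R i - max (r i) h) ≤ 0 :=
    mul_nonpos_of_nonneg_of_nonpos (hpos h hhpos).le h2
  linarith
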